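/- With notation as in the decomposition α = s·(k♭ ∧ l♭) + k♭ ∧ β + l♭ ∧ β' + γ of an alternating 2-form, the condition k♭ ∧ α = 0 holds if and only if β' = 0 and γ = 0, i.e. α = k♭ ∧ (s·l♭ + β) for some scalar s and transversal 1-form β. -/
import Mathlib


/-- With the decomposition `α = s·(k♭∧l♭) + k♭∧β + l♭∧β' + γ`, the condition
`k♭ ∧ α = 0` holds iff `β' = 0` and `γ = 0`, i.e. `α = k♭ ∧ (s·l♭ + β)`. -/
theorem stmt_3 {V : Type*} [AddCommGroup V] [Module ℝ V] [FiniteDimensional ℝ V]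
    (hdim : 4 ≤ Module.finrank ℝ V)
    (g : V →ₗ[ℝ] V →ₗ[ℝ] ℝ)
    (hsymm : ∀ x y : V, g x y = g y x)
    (hnd : ∀ v : V, (∀ w : V, g v w = 0) → v = 0)
    (k l : V) (hk : g k k = 0) (hl : g l l = 0) (hkl : g k l = 1)
    (α : V →ₗ[ℝ] V →ₗ[ℝ] ℝ) (halt : ∀ v : V, α v v = 0)
    (s : ℝ) (β β' : V →ₗ[ℝ] ℝ) (γ : V →ₗ[ℝ] V →ₗ[ℝ] ℝ)
    (hβ : β k = 0 ∧ β l = 0) (hβ' : β' k = 0 ∧ β' l = 0)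
    (hγalt : ∀ v : V, γ v v = 0)
    (hγtr : ∀ v : V, γ k v = 0 ∧ γ v k = 0 ∧ γ l v = 0 ∧ γ v l = 0)
    (hdec : ∀ v w : V, α v w =
      s * (g k v * g l w - g k w * g l v) +
      (g k v * β w - g k w * β v) +
      (g l v * β' w - g l w * β' v) +
      γ v w) :
    (∀ u v w : V, g k u * α v w + g k v * α w u + g k w * α u v = 0) ↔
      (β' = 0 ∧ γ = 0) := by
  have hgkl' : g l k = 1 := by rw [hsymm]; exact hkl
  constructor
  · intro h
    have key : ∀ v w : V, g l v * β' w - g l w * β' v + γ v w = 0 := by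
      intro v w
      have H := h l v w
      rw [hdec v w, hdec w l, hdec l v] at H
      simp only [hl, hkl, hgkl', hβ.2, hβ'.2, (hγtr w).2.2.2, (hγtr v).2.2.1] at H
      linear_combination H
    have hb : β' = 0 := by
      ext w
      have := key k w
      simp only [hgkl', hβ'.1, (hγtr w).1] at this
      simpa using by linarith
    refine ⟨hb, ?_⟩
    ext v w
    have := key v w
    rw [hb] at this
    simp only [LinearMap.zero_apply, mul_zero] at this
    simpa using by linarith
  · rintro ⟨hb, hg⟩ u v w
    simp only [hdec, hb, hg, LinearMap.zero_apply]
    ring
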